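/- Let F be a finite group (under composition) of measurable bijections of Ω, P a probability measure on 𝓑, and μ a regular conditional distribution for P given a sub-σ-field 𝓐. Define Q = (1/|F|) Σ_{f∈F} P ∘ f⁻¹ and ν(ω) = (1/|F|) Σ_{f∈F} μ(ω) ∘ f⁻¹. If 𝓐 = 𝓐_F := {B ∈ 𝓑 : f⁻¹B = B for all f ∈ F} is the F-invariant σ-field, then ν is a regular conditional distribution for Q given 𝓐. -/

import Mathlib

open MeasureTheory MeasurableSpace Set Filter
open scoped ENNReal

/-- A regular conditional distribution for `P` given the sub-σ-field `𝓐`. -/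
def IsRCD {Ω : Type*} [m𝓑 : MeasurableSpace Ω] (𝓐 : MeasurableSpace Ω)
    (P : @Measure Ω m𝓑) (μ : Ω → @Measure Ω m𝓑) : Prop :=
  (∀ ω, IsProbabilityMeasure (μ ω)) ∧
  (∀ B : Set Ω, MeasurableSet[m𝓑] B → Measurable[𝓐] fun ω => μ ω B) ∧
  (∀ B : Set Ω, MeasurableSet[m𝓑] B → ∀ A : Set Ω, MeasurableSet[𝓐] A →
    ∫⁻ ω in A, μ ω B ∂P = P (A ∩ B))


/-- The σ-field of sets invariant under every map in `F`. -/
def invariantSigma {Ω : Type*} [m𝓑 : MeasurableSpace Ω] (F : Set (Ω → Ω)) :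
    MeasurableSpace Ω where
  MeasurableSet' B := MeasurableSet[m𝓑] B ∧ ∀ f ∈ F, f ⁻¹' B = B
  measurableSet_empty := ⟨MeasurableSet.empty, fun _ _ => Set.preimage_empty⟩
  measurableSet_compl := fun B hB => ⟨hB.1.compl, fun f hf => by
    rw [Set.preimage_compl, hB.2 f hf]⟩
  measurableSet_iUnion := fun s hs => ⟨MeasurableSet.iUnion fun i => (hs i).1,
    fun f hf => by
      simp only [Set.preimage_iUnion]
      exact Set.iUnion_congr fun i => (hs i).2 f hf⟩

/-- A function measurable w.r.t. the invariant σ-field is itself invariant. -/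
lemma apply_eq_of_measurable_invariantSigma {Ω : Type*} [m𝓑 : MeasurableSpace Ω]
    (F : Set (Ω → Ω)) {h : Ω → ℝ≥0∞} (hh : Measurable[invariantSigma F] h)
    {g : Ω → Ω} (hg : g ∈ F) (ω : Ω) : h (g ω) = h ω := by
  have hs : MeasurableSet[invariantSigma F] (h ⁻¹' {h ω}) :=
    hh (measurableSet_singleton _)
  have h2 := hs.2 g hg
  have hmem : ω ∈ h ⁻¹' {h ω} := rfl
  rw [← h2] at hmem
  exact hmem

/-- For a finite group F of measurable bijections, the averaged kernel ν is
a regular conditional distribution for the averaged measure Q given the invariant σ-field. -/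
theorem stmt_5 {Ω : Type*} [m𝓑 : MeasurableSpace Ω]
    (P : @Measure Ω m𝓑) (hP : IsProbabilityMeasure P)
    (F : Set (Ω → Ω)) (hFfin : F.Finite)
    (hFm : ∀ f ∈ F, Measurable f) (hFbij : ∀ f ∈ F, Function.Bijective f)
    (hid : id ∈ F) (hcomp : ∀ f ∈ F, ∀ g ∈ F, f ∘ g ∈ F)
    (hinv : ∀ f ∈ F, ∃ g ∈ F, f ∘ g = id ∧ g ∘ f = id)
    (μ : Ω → @Measure Ω m𝓑) (hμ : @IsRCD Ω m𝓑 (invariantSigma F) P μ) :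
    @IsRCD Ω m𝓑 (invariantSigma F)
      ((hFfin.toFinset.card : ℝ≥0∞)⁻¹ • ∑ f ∈ hFfin.toFinset, P.map f)
      (fun ω => (hFfin.toFinset.card : ℝ≥0∞)⁻¹ • ∑ f ∈ hFfin.toFinset, (μ ω).map f) := by
  obtain ⟨hμ1, hμ2, hμ3⟩ := hμ
  set s := hFfin.toFinset with hsdef
  have hmem : ∀ f, f ∈ s ↔ f ∈ F := fun f => hFfin.mem_toFinset
  have hc0 : (s.card : ℝ≥0∞) ≠ 0 :=
    Nat.cast_ne_zero.mpr (Finset.card_ne_zero_of_mem ((hmem id).2 hid))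
  have hcT : (s.card : ℝ≥0∞) ≠ ⊤ := ENNReal.natCast_ne_top _
  have hle : invariantSigma F ≤ m𝓑 := fun t ht => ht.1
  -- pointwise formula for the averaged kernel
  have hrepr : ∀ (B : Set Ω), MeasurableSet[m𝓑] B → ∀ ω,
      ((s.card : ℝ≥0∞)⁻¹ • ∑ f ∈ s, (μ ω).map f) B
        = (s.card : ℝ≥0∞)⁻¹ * ∑ f ∈ s, μ ω (f ⁻¹' B) := by
    intro B hB ω
    rw [Measure.smul_apply, Measure.finset_sum_apply, smul_eq_mul]
    congr 1
    exact Finset.sum_congr rfl fun f hf =>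
      Measure.map_apply (hFm f ((hmem f).1 hf)) hB
  -- measurability of ω ↦ ν ω B w.r.t. the invariant σ-field
  have hmeas : ∀ (B : Set Ω), MeasurableSet[m𝓑] B →
      Measurable[invariantSigma F]
        (fun ω => ((s.card : ℝ≥0∞)⁻¹ • ∑ f ∈ s, (μ ω).map f) B) := by
    intro B hB
    simp_rw [hrepr B hB]
    exact Measurable.const_mul
      (Finset.measurable_sum s fun f hf => hμ2 _ ((hFm f ((hmem f).1 hf)) hB)) _
  refine ⟨?_, fun B hB => hmeas B hB, ?_⟩
  · -- probability measure
    intro ω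
    constructor
    rw [Measure.smul_apply, Measure.finset_sum_apply, smul_eq_mul]
    have h1 : ∀ f ∈ s, (μ ω).map f Set.univ = 1 := by
      intro f hf
      rw [Measure.map_apply (hFm f ((hmem f).1 hf)) MeasurableSet.univ,
        Set.preimage_univ]
      exact (hμ1 ω).measure_univ
    rw [Finset.sum_congr rfl h1, Finset.sum_const, nsmul_eq_mul, mul_one,
      ENNReal.inv_mul_cancel hc0 hcT]
  · -- the defining integral identity
    intro B hB A hA
    have hAm : MeasurableSet[m𝓑] A := hA.1
    set h : Ω → ℝ≥0∞ :=
      fun ω => ((s.card : ℝ≥0∞)⁻¹ • ∑ f ∈ s, (μ ω).map f) B with hhdef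
    have hhA : Measurable[invariantSigma F] h := hmeas B hB
    have hhB : Measurable[m𝓑] h := hhA.mono hle le_rfl
    have hginv : ∀ g ∈ F, ∀ ω, h (g ω) = h ω :=
      fun g hg ω => apply_eq_of_measurable_invariantSigma F hhA hg ω
    -- the indicator of A times h is invariant
    have key : ∀ g ∈ F, ∀ ω, A.indicator h (g ω) = A.indicator h ω := by
      intro g hg ω
      by_cases hω : ω ∈ A
      · have hω' : g ω ∈ A := by rw [← hA.2 g hg] at hω; exact hω
        rw [Set.indicator_of_mem hω' h, Set.indicator_of_mem hω h, hginv g hg ω]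
      · have hω' : g ω ∉ A := fun hc => hω (by rw [← hA.2 g hg]; exact hc)
        rw [Set.indicator_of_notMem hω' h, Set.indicator_of_notMem hω h]
    -- compute the left-hand side
    have hL : (∫⁻ ω in A, h ω ∂((s.card : ℝ≥0∞)⁻¹ • ∑ f ∈ s, P.map f))
        = ∫⁻ ω in A, h ω ∂P := by
      rw [← lintegral_indicator hAm h, lintegral_smul_measure,
        lintegral_finset_sum_measure]
      have hterm : ∀ g ∈ s, (∫⁻ ω, A.indicator h ω ∂(P.map g))
          = ∫⁻ ω, A.indicator h ω ∂P := by
        intro g hg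
        rw [lintegral_map (hhB.indicator hAm) (hFm g ((hmem g).1 hg))]
        exact lintegral_congr (key g ((hmem g).1 hg))
      rw [Finset.sum_congr rfl hterm, Finset.sum_const, nsmul_eq_mul, smul_eq_mul, ← mul_assoc,
        ENNReal.inv_mul_cancel hc0 hcT, one_mul, lintegral_indicator hAm h]
    rw [hL]
    -- compute ∫⁻ in A, h dP
    have hIn : (∫⁻ ω in A, h ω ∂P)
        = (s.card : ℝ≥0∞)⁻¹ * ∑ f ∈ s, P (A ∩ f ⁻¹' B) := by
      simp only [hhdef]
      simp_rw [hrepr B hB]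
      rw [lintegral_const_mul' _ _ (ENNReal.inv_ne_top.mpr hc0)]
      congr 1
      rw [lintegral_finset_sum _ fun f hf =>
        (hμ2 _ ((hFm f ((hmem f).1 hf)) hB)).mono hle le_rfl]
      exact Finset.sum_congr rfl fun f hf =>
        hμ3 (f ⁻¹' B) ((hFm f ((hmem f).1 hf)) hB) A hA
    rw [hIn]
    -- compute the right-hand side
    rw [Measure.smul_apply, Measure.finset_sum_apply, smul_eq_mul]
    congr 1
    refine Finset.sum_congr rfl fun g hg => ?_
    rw [Measure.map_apply (hFm g ((hmem g).1 hg)) (hAm.inter hB),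
      Set.preimage_inter, hA.2 g ((hmem g).1 hg)]
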